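/- Let E be a real Hilbert space and G : E × E → ℝ ∪ {+∞} an anti-selfdual Lagrangian with G(0,0) < +∞, and for λ > 0 let G_λ(x, p) = inf { G(z, p) + ‖x − z‖²/(2λ) + (λ/2)‖p‖² : z ∈ E } be its λ-regularization. Suppose (λ_n) is a sequence of positive numbers with λ_n → 0, and (x_n), (p_n) are sequences in E with x_n ⇀ x and p_n ⇀ p weakly, such that the sequence G_{λ_n}(x_n, p_n) is bounded from above. Then G(x, p) ≤ liminf_{n → ∞} G_{λ_n}(x_n, p_n). -/

import Mathlib

open MeasureTheory Set Filter Topology RealInnerProductSpace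

noncomputable section

variable {E : Type*} [NormedAddCommGroup E] [InnerProductSpace ℝ E]

/-- Fenchel conjugate in both variables. -/
def conj2Fn (L : E → E → EReal) (p q : E) : EReal :=
  ⨆ x : E, ⨆ y : E, ((⟪p, x⟫ + ⟪q, y⟫ : ℝ) : EReal) - L x y

/-- Convexity for extended-real-valued functions. -/
def ConvexEF {F : Type*} [AddCommMonoid F] [Module ℝ F] (f : F → EReal) : Prop :=
  ∀ x y : F, ∀ a b : ℝ, 0 ≤ a → 0 ≤ b → a + b = 1 →
    f (a • x + b • y) ≤ (a : EReal) * f x + (b : EReal) * f y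

/-- Anti-selfdual Lagrangian: convex, lower semicontinuous and `L*(p,x) = L(-x,-p)`. -/
def IsASD (L : E → E → EReal) : Prop :=
  ConvexEF (fun z : E × E => L z.1 z.2) ∧
  LowerSemicontinuous (fun z : E × E => L z.1 z.2) ∧
  ∀ x p : E, conj2Fn L p x = L (-x) (-p)

/-- The `λ`-regularization `G_λ(x,p) = inf_z { G(z,p) + ‖x-z‖²/(2λ) + (λ/2)‖p‖² }`. -/
def lamReg (G : E → E → EReal) (lam : ℝ) (x p : E) : EReal :=
  ⨅ z : E, G z p + ((‖x - z‖^2 / (2*lam) : ℝ) : EReal) + ((lam/2 * ‖p‖^2 : ℝ) : EReal)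


private lemma EReal.exists_real' (x : EReal) (h1 : x ≠ ⊥) (h2 : x ≠ ⊤) : ∃ c : ℝ, x = (c : EReal) := by
  induction x using EReal.rec with
  | bot => exact absurd rfl h1
  | top => exact absurd rfl h2
  | coe c => exact ⟨c, rfl⟩

private lemma ereal_sub_swap (a : ℝ) (b c : EReal) (hb : b ≠ ⊥) (hc : c ≠ ⊥)
    (h : (a : EReal) - c ≤ b) : (a : EReal) - b ≤ c := by
  rw [EReal.sub_le_iff_le_add (Or.inl hb) (Or.inr hc)]
  rw [EReal.sub_le_iff_le_add (Or.inl hc) (Or.inr hb)] at h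
  rwa [add_comm] at h

private lemma asd_ne_bot (G : E → E → EReal)
    (hASD : ∀ x p : E, conj2Fn G p x = G (-x) (-p)) (hG00 : G 0 0 < ⊤) :
    ∀ z w : E, G z w ≠ ⊥ := by
  intro z w hzw
  have h0 : conj2Fn G 0 0 = G 0 0 := by simpa using hASD 0 0
  have htop : (⊤ : EReal) ≤ conj2Fn G 0 0 := by
    have hterm : ((⟪(0:E), z⟫ + ⟪(0:E), w⟫ : ℝ) : EReal) - G z w = ⊤ := by
      rw [hzw]; exact EReal.sub_bot (EReal.coe_ne_bot _)
    calc (⊤ : EReal) = ((⟪(0:E), z⟫ + ⟪(0:E), w⟫ : ℝ) : EReal) - G z w := hterm.symm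
      _ ≤ conj2Fn G 0 0 := le_iSup_of_le z (le_iSup_of_le w le_rfl)
  rw [h0, top_le_iff] at htop
  rw [htop] at hG00
  exact lt_irrefl _ hG00

private lemma asd_fenchel (G : E → E → EReal)
    (hASD : ∀ x p : E, conj2Fn G p x = G (-x) (-p))
    (hnb : ∀ z w : E, G z w ≠ ⊥) (u v z w : E) :
    ((⟪-w, u⟫ + ⟪-z, v⟫ : ℝ) : EReal) - G z w ≤ G u v := by
  apply ereal_sub_swap _ _ _ (hnb z w) (hnb u v)
  have h2 : conj2Fn G (-w) (-z) = G z w := by simpa using hASD (-z) (-w)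
  calc ((⟪-w, u⟫ + ⟪-z, v⟫ : ℝ) : EReal) - G u v
      ≤ conj2Fn G (-w) (-z) := le_iSup_of_le u (le_iSup_of_le v le_rfl)
    _ = G z w := h2

/-- Weak lower semicontinuity of an anti-selfdual Lagrangian along its
`λ`-regularizations: if `λₙ → 0`, `xₙ ⇀ x`, `pₙ ⇀ p` weakly, and `G_{λₙ}(xₙ,pₙ)` is
bounded above, then `G(x,p) ≤ liminf G_{λₙ}(xₙ,pₙ)`. -/
theorem lamReg_liminf (G : E → E → EReal) (hG : IsASD G) (hG00 : G 0 0 < ⊤)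
    (lam : ℕ → ℝ) (hpos : ∀ n, 0 < lam n) (hlam : Tendsto lam atTop (nhds 0))
    (x p : ℕ → E) (x₀ p₀ : E)
    (hx : ∀ y : E, Tendsto (fun n => (⟪y, x n⟫ : ℝ)) atTop (nhds ⟪y, x₀⟫))
    (hp : ∀ y : E, Tendsto (fun n => (⟪y, p n⟫ : ℝ)) atTop (nhds ⟪y, p₀⟫))
    (hbdd : ∃ c : ℝ, ∀ n, lamReg G (lam n) (x n) (p n) ≤ (c : EReal)) :
    G x₀ p₀ ≤ Filter.liminf (fun n => lamReg G (lam n) (x n) (p n)) atTop := by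
  obtain ⟨hconv, hlsc, hASD⟩ := hG
  have hnb : ∀ z w : E, G z w ≠ ⊥ := asd_ne_bot G hASD hG00
  have hrep : G x₀ p₀ = conj2Fn G (-p₀) (-x₀) := by simpa using (hASD (-x₀) (-p₀)).symm
  rw [hrep, conj2Fn]
  refine iSup_le fun z => iSup_le fun w => ?_
  rcases eq_or_ne (G z w) ⊤ with hc | hc
  · rw [hc, EReal.sub_top]; exact bot_le
  obtain ⟨c, hc⟩ := EReal.exists_real' (G z w) (hnb z w) hc
  set f : ℕ → ℝ := fun n => -⟪w, x n⟫ - ⟪z, p n⟫ - c - lam n / 2 * ‖w‖ ^ 2 with hf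
  -- pointwise lower bound
  have hA : ∀ n, ((f n : ℝ) : EReal) ≤ lamReg G (lam n) (x n) (p n) := by
    intro n
    rw [lamReg]
    refine le_iInf fun u => ?_
    have hF := asd_fenchel G hASD hnb u (p n) z w
    rw [hc] at hF
    rw [show ((⟪-w, u⟫ + ⟪-z, p n⟫ : ℝ) : EReal) - (c : EReal)
        = ((⟪-w, u⟫ + ⟪-z, p n⟫ - c : ℝ) : EReal) from (EReal.coe_sub _ _).symm] at hF
    have hsum : ((⟪-w, u⟫ + ⟪-z, p n⟫ - c : ℝ) : EReal)
          + ((‖x n - u‖ ^ 2 / (2 * lam n) : ℝ) : EReal)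
          + ((lam n / 2 * ‖p n‖ ^ 2 : ℝ) : EReal)
        ≤ G u (p n) + ((‖x n - u‖ ^ 2 / (2 * lam n) : ℝ) : EReal)
          + ((lam n / 2 * ‖p n‖ ^ 2 : ℝ) : EReal) :=
      add_le_add (add_le_add hF le_rfl) le_rfl
    refine le_trans ?_ hsum
    rw [← EReal.coe_add, ← EReal.coe_add, EReal.coe_le_coe_iff]
    have h1 : ⟪w, u - x n⟫ ≤ ‖w‖ * ‖u - x n‖ := real_inner_le_norm w (u - x n)
    rw [inner_sub_right, norm_sub_rev] at h1
    have h2 : (0:ℝ) < 2 * lam n := by linarith [hpos n]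
    have key : ‖w‖ * ‖x n - u‖ ≤ lam n / 2 * ‖w‖ ^ 2 + ‖x n - u‖ ^ 2 / (2 * lam n) := by
      rw [← sub_le_iff_le_add', le_div_iff₀ h2]
      nlinarith [sq_nonneg (lam n * ‖w‖ - ‖x n - u‖)]
    have h3 : (0:ℝ) ≤ lam n / 2 * ‖p n‖ ^ 2 :=
      mul_nonneg (by linarith [hpos n]) (sq_nonneg _)
    simp only [hf, inner_neg_left]
    linarith
  -- limit of f
  have hL : Tendsto f atTop (nhds (-⟪w, x₀⟫ - ⟪z, p₀⟫ - c - 0 / 2 * ‖w‖ ^ 2)) := by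
    exact ((((hx w).neg.sub (hp z)).sub tendsto_const_nhds).sub
      ((hlam.div_const 2).mul tendsto_const_nhds))
  have hlim : Filter.liminf (fun n => ((f n : ℝ) : EReal)) atTop
      = ((-⟪w, x₀⟫ - ⟪z, p₀⟫ - c - 0 / 2 * ‖w‖ ^ 2 : ℝ) : EReal) :=
    (EReal.tendsto_coe.mpr hL).liminf_eq
  have heq : ((⟪-p₀, z⟫ + ⟪-x₀, w⟫ : ℝ) : EReal) - (c : EReal)
      = ((-⟪w, x₀⟫ - ⟪z, p₀⟫ - c - 0 / 2 * ‖w‖ ^ 2 : ℝ) : EReal) := by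
    rw [← EReal.coe_sub]
    congr 1
    rw [inner_neg_left, inner_neg_left, real_inner_comm p₀ z, real_inner_comm x₀ w]
    ring
  rw [hc, heq, ← hlim]
  exact Filter.liminf_le_liminf (Filter.Eventually.of_forall hA)
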